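/- arXiv:1610.09783 — 2 statements merged into one kernel-verified Lean document; each statement's English description precedes it below -/
import Mathlib

section
/- Let M be a mixed graph whose underlying graph M_U is r-regular with r ≠ 0, and let p = |det R_H(M)|. Then √(n/r + n(n-1)p^{2/n}) ≤ E_{R_H}(M) ≤ n/√r. -/
open Matrix BigOperators

noncomputable section
open scoped Classical

/-- A mixed graph on vertex set `V`, encoded by its Hermitian-adjacency matrix:
entries are `1` for undirected edges, `i`/`-i` for arcs, `0` otherwise. -/
structure MixedGraph (V : Type) [Fintype V] [DecidableEq V] where
  h : Matrix V V ℂ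
  herm : h.IsHermitian
  loopless : ∀ k, h k k = 0
  entries : ∀ k l, h k l = 0 ∨ h k l = 1 ∨ h k l = Complex.I ∨ h k l = -Complex.I

namespace MixedGraph

variable {V : Type} [Fintype V] [DecidableEq V]

/-- Degree of a vertex in the underlying graph. -/
def deg (M : MixedGraph V) (k : V) : ℕ :=
  (Finset.univ.filter fun l => M.h k l ≠ 0).card

/-- The Hermitian–Randić matrix of a mixed graph. -/
def RH (M : MixedGraph V) : Matrix V V ℂ :=
  fun k l => M.h k l / ((Real.sqrt (M.deg k) * Real.sqrt (M.deg l) : ℝ) : ℂ)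

theorem RH_isHermitian (M : MixedGraph V) : (M.RH).IsHermitian := by
  ext k l
  simp only [RH, Matrix.conjTranspose_apply, star_div₀, Complex.star_def,
    Complex.conj_ofReal, M.herm.apply k l, mul_comm (Real.sqrt (M.deg l))]

/-- The Hermitian–Randić energy: sum of absolute values of the eigenvalues of `RH`. -/
def energyRH (M : MixedGraph V) : ℝ := ∑ i, |M.RH_isHermitian.eigenvalues i|

/-- The Hermitian energy: sum of absolute values of the eigenvalues of `H(M)`. -/
def energyH (M : MixedGraph V) : ℝ := ∑ i, |M.herm.eigenvalues i|

/-- The general Randić index `R₋₁` of the underlying graph. -/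
def Rm1 (M : MixedGraph V) : ℝ :=
  (1 / 2) * ∑ k, ∑ l, if M.h k l ≠ 0 then ((M.deg k : ℝ) * (M.deg l : ℝ))⁻¹ else 0

/-- The underlying simple graph of a mixed graph. -/
def underlying (M : MixedGraph V) : SimpleGraph V where
  Adj k l := M.h k l ≠ 0
  symm := by
    refine ⟨?_⟩
    intro k l hkl h0
    exact hkl (by rw [← M.herm.apply k l, h0, star_zero])
  loopless := ⟨fun k hk => hk (M.loopless k)⟩

end MixedGraph

lemma trace_sq_eq' {V : Type} [Fintype V] [DecidableEq V] (A : Matrix V V ℂ) (hA : A.IsHermitian) :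
    (A * A).trace = ∑ i, ((hA.eigenvalues i : ℝ) : ℂ)^2 := by
  set U : Matrix V V ℂ := (Matrix.IsHermitian.eigenvectorUnitary hA : Matrix V V ℂ) with hUdef
  have hU : star U * U = 1 :=
    (Matrix.mem_unitaryGroup_iff').mp (Matrix.IsHermitian.eigenvectorUnitary hA).2
  set D := Matrix.diagonal (RCLike.ofReal ∘ hA.eigenvalues : V → ℂ) with hD
  have h : A = U * D * star U := hA.spectral_theorem
  have key : A * A = U * (D * D) * star U := by
    rw [h]; simp only [mul_assoc]; rw [← mul_assoc (star U) U, hU, one_mul]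
  rw [key, Matrix.trace_mul_cycle, ← mul_assoc, hU, one_mul, hD,
    Matrix.diagonal_mul_diagonal, Matrix.trace_diagonal]
  simp [sq]

lemma trace_RH_sq' {V : Type} [Fintype V] [DecidableEq V]
    (M : MixedGraph V) (r : ℕ) (hr : r ≠ 0) (hreg : ∀ k, M.deg k = r) :
    (M.RH * M.RH).trace = (((Fintype.card V : ℝ) / (r : ℝ) : ℝ) : ℂ) := by
  have hrr : (Real.sqrt r * Real.sqrt r : ℝ) = r := Real.mul_self_sqrt (Nat.cast_nonneg r)
  have hnorm : ∀ k l, Complex.normSq (M.h k l) = if M.h k l ≠ 0 then 1 else 0 := by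
    intro k l
    rcases M.entries k l with h' | h' | h' | h' <;> simp [h']
  have entry : ∀ k l, M.RH k l * M.RH l k =
      ((if M.h k l ≠ 0 then ((r:ℝ)*(r:ℝ))⁻¹ else 0 : ℝ) : ℂ) := by
    intro k l
    have hs : M.RH l k = star (M.RH k l) := (M.RH_isHermitian.apply l k).symm
    rw [hs, Complex.star_def, Complex.mul_conj]
    unfold MixedGraph.RH
    rw [hreg k, hreg l, hrr, map_div₀, hnorm, Complex.normSq_ofReal]
    split_ifs <;> push_cast <;> ring
  have htr : (M.RH * M.RH).trace = ∑ k, ∑ l, M.RH k l * M.RH l k := by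
    simp [Matrix.trace, Matrix.mul_apply, Matrix.diag]
  rw [htr]
  simp only [entry]
  norm_cast
  have inner : ∀ k : V, (∑ l, (if ¬ M.h k l = 0 then (((r*r : ℕ)):ℝ)⁻¹ else 0)) = (r : ℝ)⁻¹ := by
    intro k
    rw [Finset.sum_ite, Finset.sum_const, Finset.sum_const, smul_zero, add_zero]
    have hc : (Finset.univ.filter fun l => ¬ M.h k l = 0).card = r := hreg k
    rw [hc]
    have hr' : (r : ℝ) ≠ 0 := Nat.cast_ne_zero.mpr hr
    push_cast
    field_simp
    rw [nsmul_eq_mul, one_div, ← mul_assoc, ← sq, mul_inv_cancel₀ (pow_ne_zero 2 hr')]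
  simp only [inner, Finset.sum_const, Finset.card_univ, nsmul_eq_mul]
  rw [div_eq_mul_inv]


/-- if the underlying graph is `r`-regular (`r ≠ 0`) then, with
`p = |det R_H(M)|`, `√(n/r + n(n-1)p^{2/n}) ≤ E_{R_H}(M) ≤ n/√r`. -/
theorem energyRH_bounds_regular {V : Type} [Fintype V] [DecidableEq V]
    (M : MixedGraph V) (r : ℕ) (hr : r ≠ 0) (hreg : ∀ k, M.deg k = r) :
    Real.sqrt ((Fintype.card V : ℝ) / (r : ℝ) +
        (Fintype.card V : ℝ) * ((Fintype.card V : ℝ) - 1) *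
          (‖M.RH.det‖) ^ ((2 : ℝ) / (Fintype.card V : ℝ))) ≤ M.energyRH ∧
      M.energyRH ≤ (Fintype.card V : ℝ) / Real.sqrt (r : ℝ) := by
  set n := Fintype.card V with hn
  set lam := M.RH_isHermitian.eigenvalues with hlam
  set a : V → ℝ := fun i => |lam i| with ha
  set p := ‖M.RH.det‖ with hpdef
  have ha0 : ∀ i, 0 ≤ a i := fun i => abs_nonneg _
  have hE : M.energyRH = ∑ i, a i := rfl
  have hE0 : 0 ≤ M.energyRH := by rw [hE]; exact Finset.sum_nonneg fun i _ => ha0 i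
  -- case n = 0
  rcases Nat.eq_zero_or_pos n with h0 | hn1
  · have : IsEmpty V := Fintype.card_eq_zero_iff.mp h0
    have hE' : M.energyRH = 0 := by rw [hE]; simp
    rw [hE', h0]
    norm_num
  -- sum of squared eigenvalues
  have hnR : (0:ℝ) < n := by exact_mod_cast hn1
  have hsum : ∑ i, (lam i)^2 = (n : ℝ) / r := by
    have h1 := trace_sq_eq' M.RH M.RH_isHermitian
    have h2 := trace_RH_sq' M r hr hreg
    rw [h1] at h2
    have h3 : ((∑ i, (lam i)^2 : ℝ) : ℂ) = (((n : ℝ) / r : ℝ) : ℂ) := by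
      push_cast
      push_cast at h2
      exact h2
    exact_mod_cast h3
  -- p = product of |eigenvalues|
  have hp : p = ∏ i, a i := by
    rw [hpdef, M.RH_isHermitian.det_eq_prod_eigenvalues, norm_prod]
    simp [ha]
    rfl
  have hp0 : 0 ≤ p := norm_nonneg _
  -- E² decomposition
  set S := ∑ q ∈ Finset.univ.offDiag, a q.1 * a q.2 with hSdef
  have hS0 : 0 ≤ S := Finset.sum_nonneg fun q _ => mul_nonneg (ha0 _) (ha0 _)
  have hE2 : M.energyRH ^ 2 = (n : ℝ) / r + S := by
    have expand : (∑ i, a i) ^ 2 = ∑ q ∈ Finset.univ ×ˢ Finset.univ, a q.1 * a q.2 := by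
      rw [sq, Finset.sum_mul_sum, ← Finset.sum_product']
    have split : ∑ q ∈ (Finset.univ : Finset V) ×ˢ Finset.univ, a q.1 * a q.2 =
        (∑ q ∈ (Finset.univ : Finset V).diag, a q.1 * a q.2) + S := by
      rw [← Finset.diag_union_offDiag, Finset.sum_union (Finset.disjoint_diag_offDiag _)]
    have diag : ∑ q ∈ (Finset.univ : Finset V).diag, a q.1 * a q.2 = ∑ i, (lam i)^2 := by
      rw [Finset.sum_diag]
      exact Finset.sum_congr rfl fun i _ => by rw [ha]; simp [sq_abs, sq]
    rw [hE, expand, split, diag, hsum]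
  constructor
  · -- lower bound
    have hkey : (n : ℝ) * ((n : ℝ) - 1) * p ^ ((2:ℝ)/(n:ℝ)) ≤ S := by
      rcases eq_or_lt_of_le (Nat.one_le_iff_ne_zero.mpr (Nat.pos_iff_ne_zero.mp hn1)) with h1 | h2
      · -- n = 1
        rw [← h1]
        simpa using hS0
      · -- n ≥ 2
        have hn2 : (2:ℝ) ≤ (n:ℝ) := by exact_mod_cast h2
        rcases eq_or_lt_of_le hp0 with hpz | hppos
        · rw [← hpz, Real.zero_rpow (by positivity), mul_zero]
          exact hS0
        · -- AM-GM
          set N : ℝ := (n : ℝ) * ((n : ℝ) - 1) with hNdef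
          have hNpos : 0 < N := by nlinarith
          have hcard : ((Finset.univ : Finset V).offDiag.card : ℝ) = N := by
            rw [Finset.offDiag_card, Finset.card_univ, ← hn]
            have : n ≤ n * n := Nat.le_mul_of_pos_left n hn1
            push_cast [Nat.cast_sub this]
            ring
          have amgm := Real.geom_mean_le_arith_mean_weighted
            (Finset.univ : Finset V).offDiag (fun _ => 1/N) (fun q => a q.1 * a q.2)
            (fun i _ => by positivity)
            (by rw [Finset.sum_const, nsmul_eq_mul, hcard]; field_simp)
            (fun q _ => mul_nonneg (ha0 _) (ha0 _))
          have hprodall : ∏ q ∈ (Finset.univ : Finset V) ×ˢ Finset.univ, a q.1 * a q.2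
              = p ^ (2 * n) := by
            rw [Finset.prod_product]
            have : ∀ i : V, ∏ j, (a i * a j) = a i ^ n * p := by
              intro i
              rw [Finset.prod_mul_distrib, Finset.prod_const, Finset.card_univ, hp, ← hn]
            simp only [this]
            rw [Finset.prod_mul_distrib, Finset.prod_const, Finset.card_univ, Finset.prod_pow,
              ← hp, ← hn, ← pow_add, two_mul]
          have hproddiag : ∏ q ∈ (Finset.univ : Finset V).diag, a q.1 * a q.2 = p ^ 2 := by
            rw [Finset.prod_diag, hp, sq, ← Finset.prod_mul_distrib]
          have hsplit : ∏ q ∈ (Finset.univ : Finset V) ×ˢ Finset.univ, a q.1 * a q.2 =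
              (∏ q ∈ (Finset.univ : Finset V).diag, a q.1 * a q.2) *
              ∏ q ∈ (Finset.univ : Finset V).offDiag, a q.1 * a q.2 := by
            rw [← Finset.diag_union_offDiag, Finset.prod_union (Finset.disjoint_diag_offDiag _)]
          have hpoff : ∏ q ∈ (Finset.univ : Finset V).offDiag, a q.1 * a q.2
              = p ^ (2 * n - 2) := by
            have hpne : p ≠ 0 := ne_of_gt hppos
            have h2n : 2 ≤ 2 * n := by omega
            have hpp : p ^ (2*n) = p^2 * p^(2*n-2) := by
              rw [← pow_add]; congr 1; omega
            have heq : p ^ (2*n) = p ^ 2 * ∏ q ∈ (Finset.univ : Finset V).offDiag,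
                a q.1 * a q.2 := by
              rw [← hprodall, hsplit, hproddiag]
            rw [hpp] at heq
            exact (mul_left_cancel₀ (pow_ne_zero 2 hpne) heq.symm)
          -- rewrite LHS of amgm
          rw [Real.finset_prod_rpow _ _ (fun q _ => mul_nonneg (ha0 _) (ha0 _)) _] at amgm
          rw [hpoff, ← Real.rpow_natCast p (2*n-2), ← Real.rpow_mul hp0] at amgm
          have hexp : ((2 * n - 2 : ℕ) : ℝ) * (1/N) = (2:ℝ)/(n:ℝ) := by
            have h2n : 2 ≤ 2 * n := by omega
            push_cast [Nat.cast_sub h2n]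
            rw [hNdef]
            have hne : (n:ℝ) ≠ 0 := ne_of_gt hnR
            have hne1 : (n:ℝ) - 1 ≠ 0 := by nlinarith
            field_simp
          rw [hexp] at amgm
          have hrhs : ∑ q ∈ (Finset.univ : Finset V).offDiag, (1/N) * (a q.1 * a q.2)
              = S / N := by
            rw [← Finset.mul_sum, ← hSdef]
            field_simp
          rw [hrhs] at amgm
          calc N * p ^ ((2:ℝ)/(n:ℝ)) ≤ N * (S / N) := by
                exact mul_le_mul_of_nonneg_left amgm (le_of_lt hNpos)
            _ = S := by field_simp
    have hle : (n : ℝ) / r + (n : ℝ) * ((n : ℝ) - 1) * p ^ ((2:ℝ)/(n:ℝ))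
        ≤ M.energyRH ^ 2 := by rw [hE2]; linarith
    calc Real.sqrt ((n : ℝ) / r + (n : ℝ) * ((n : ℝ) - 1) * p ^ ((2:ℝ)/(n:ℝ)))
        ≤ Real.sqrt (M.energyRH ^ 2) := Real.sqrt_le_sqrt hle
      _ = M.energyRH := Real.sqrt_sq hE0
  · -- upper bound
    have hCS : M.energyRH ^ 2 ≤ (n:ℝ) * ((n:ℝ)/r) := by
      have := sq_sum_le_card_mul_sum_sq (s := (Finset.univ : Finset V)) (f := a)
      rw [Finset.card_univ, ← hn] at this
      have hsq : ∑ i, a i ^ 2 = ∑ i, (lam i)^2 := by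
        exact Finset.sum_congr rfl fun i _ => by rw [ha]; simp [sq_abs]
      rw [hE]
      calc (∑ i, a i)^2 ≤ (n:ℝ) * ∑ i, a i ^ 2 := this
        _ = (n:ℝ) * ((n:ℝ)/r) := by rw [hsq, hsum]
    have hrR : (0:ℝ) < r := by exact_mod_cast Nat.pos_of_ne_zero hr
    have : M.energyRH ≤ Real.sqrt ((n:ℝ) * ((n:ℝ)/r)) := Real.le_sqrt_of_sq_le hCS
    calc M.energyRH ≤ Real.sqrt ((n:ℝ) * ((n:ℝ)/r)) := this
      _ = (n:ℝ) / Real.sqrt r := by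
          rw [show (n:ℝ) * ((n:ℝ)/r) = (n:ℝ)^2 / r by ring, Real.sqrt_div (sq_nonneg _) r,
            Real.sqrt_sq (le_of_lt hnR)]
end
end

section
/- If M is a mixed bipartite graph (its underlying graph is bipartite), then the spectrum of its Hermitian-Randić matrix R_H(M) is symmetric about 0; in particular, all odd-indexed coefficients a_{2k+1} of the characteristic polynomial of R_H(M) vanish. -/
open Matrix BigOperators

noncomputable section
open scoped Classical

open Polynomial in
lemma charpoly_conj_aux {n : Type} [Fintype n] [DecidableEq n]
    (U W A : Matrix n n ℂ) (hUW : U * W = 1) :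
    (U * A * W).charpoly = A.charpoly := by
  have hcm : charmatrix (U * A * W) = U.map C * charmatrix A * W.map C := by
    unfold charmatrix
    simp only [RingHom.mapMatrix_apply]
    rw [Matrix.map_mul, Matrix.map_mul, mul_sub, sub_mul]
    congr 1
    rw [← ((Matrix.scalar_commute (X : ℂ[X]) (fun r' => Commute.all _ _) (U.map C))).eq,
      mul_assoc, ← Matrix.map_mul, hUW, Matrix.map_one C (map_zero C) (map_one C),
      mul_one]
  have hdet : (U.map C).det * (W.map C).det = 1 := by
    rw [← det_mul, ← Matrix.map_mul, hUW, Matrix.map_one C (map_zero C) (map_one C), det_one]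
  rw [Matrix.charpoly, Matrix.charpoly, hcm, det_mul, det_mul, mul_right_comm, hdet, one_mul]

open Polynomial in
lemma charpoly_diag {n : Type} [Fintype n] [DecidableEq n] (g : n → ℂ) :
    (Matrix.diagonal g).charpoly = ∏ i, (X - C (g i)) := by
  rw [Matrix.charpoly]
  unfold charmatrix
  simp only [RingHom.mapMatrix_apply, Matrix.scalar_apply]
  rw [Matrix.diagonal_map (map_zero C), Matrix.diagonal_sub, Matrix.det_diagonal]

open Polynomial in
lemma herm_charpoly_prod {n : Type} [Fintype n] [DecidableEq n]
    {A : Matrix n n ℂ} (hA : A.IsHermitian) :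
    A.charpoly = ∏ i, (X - C (hA.eigenvalues i : ℂ)) := by
  have hU : (hA.eigenvectorUnitary : Matrix n n ℂ) *
      star (hA.eigenvectorUnitary : Matrix n n ℂ) = 1 :=
    Matrix.mem_unitaryGroup_iff.mp (hA.eigenvectorUnitary).2
  conv_lhs => rw [hA.spectral_theorem, Unitary.conjStarAlgAut_apply]
  rw [charpoly_conj_aux _ _ _ hU, charpoly_diag]
  simp [Function.comp]

open Polynomial in
lemma herm_charpoly_prod_neg {n : Type} [Fintype n] [DecidableEq n]
    {A : Matrix n n ℂ} (hA : A.IsHermitian) :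
    (-A).charpoly = ∏ i, (X - C (-(hA.eigenvalues i) : ℂ)) := by
  have hU : (hA.eigenvectorUnitary : Matrix n n ℂ) *
      star (hA.eigenvectorUnitary : Matrix n n ℂ) = 1 :=
    Matrix.mem_unitaryGroup_iff.mp (hA.eigenvectorUnitary).2
  have hneg : -A = (hA.eigenvectorUnitary : Matrix n n ℂ) *
      Matrix.diagonal (fun i => (-(hA.eigenvalues i) : ℂ)) *
      star (hA.eigenvectorUnitary : Matrix n n ℂ) := by
    conv_lhs => rw [hA.spectral_theorem, Unitary.conjStarAlgAut_apply]
    have : Matrix.diagonal (fun i => (-(hA.eigenvalues i) : ℂ)) =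
        -Matrix.diagonal (RCLike.ofReal ∘ hA.eigenvalues) := by
      rw [← Matrix.diagonal_neg]
      norm_num [Function.comp]
    rw [this, Matrix.mul_neg, Matrix.neg_mul]
  rw [hneg, charpoly_conj_aux _ _ _ hU, charpoly_diag]

open Polynomial

/-- if `M` is a mixed bipartite graph, the spectrum of `R_H(M)` is
symmetric about 0; in particular all odd coefficients `a_{2k+1}` of its
characteristic polynomial `xⁿ + a₁xⁿ⁻¹ + ⋯ + aₙ` vanish. -/
theorem spectrum_symm_of_bipartite {V : Type} [Fintype V] [DecidableEq V]
    (M : MixedGraph V) (f : V → Bool)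
    (hbip : ∀ k l, M.h k l ≠ 0 → f k ≠ f l) :
    (∃ σ : V ≃ V, ∀ i,
        M.RH_isHermitian.eigenvalues (σ i) = -M.RH_isHermitian.eigenvalues i) ∧
      ∀ j, Odd j → j ≤ Fintype.card V →
        M.RH.charpoly.coeff (Fintype.card V - j) = 0 := by
  classical
  have hA := M.RH_isHermitian
  set lam : V → ℝ := M.RH_isHermitian.eigenvalues with hlam
  set d : V → ℂ := fun k => if f k then 1 else -1 with hd
  have hDD : Matrix.diagonal d * Matrix.diagonal d = 1 := by
    rw [Matrix.diagonal_mul_diagonal]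
    have : (fun k => d k * d k) = fun _ => (1:ℂ) := by
      funext k; by_cases h : f k <;> simp [hd, h]
    rw [this, Matrix.diagonal_one]
  have hconj : Matrix.diagonal d * M.RH * Matrix.diagonal d = -M.RH := by
    ext k l
    simp only [Matrix.diagonal_mul, Matrix.mul_diagonal, Matrix.neg_apply]
    by_cases h0 : M.h k l = 0
    · have : M.RH k l = 0 := by simp [MixedGraph.RH, h0]
      rw [this]; ring
    · have hne := hbip k l h0
      have hdd : d k * d l = -1 := by
        cases hk : f k <;> cases hl : f l <;> simp [hd, hk, hl] at hne ⊢
      calc d k * M.RH k l * d l = (d k * d l) * M.RH k l := by ring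
        _ = -M.RH k l := by rw [hdd]; ring
  have hcp : M.RH.charpoly = (-M.RH).charpoly := by
    rw [← hconj]; exact (charpoly_conj_aux _ _ _ hDD).symm
  set t : Multiset ℂ := Finset.univ.val.map (fun i => ((lam i : ℂ))) with ht
  have h1 : M.RH.charpoly = (t.map fun r => X - C r).prod := by
    rw [herm_charpoly_prod M.RH_isHermitian, Finset.prod_eq_multiset_prod, ht,
      Multiset.map_map]
    rfl
  have h2 : (-M.RH).charpoly = ((t.map Neg.neg).map fun r => X - C r).prod := by
    rw [herm_charpoly_prod_neg M.RH_isHermitian, Finset.prod_eq_multiset_prod, ht,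
      Multiset.map_map, Multiset.map_map]
    rfl
  have hts : t = t.map Neg.neg := by
    have r1 := Polynomial.roots_multiset_prod_X_sub_C t
    have r2 := Polynomial.roots_multiset_prod_X_sub_C (t.map Neg.neg)
    rw [← h1] at r1
    rw [← h2] at r2
    conv_lhs => rw [← r1]
    conv_rhs => rw [← r2]
    rw [hcp]
  constructor
  · -- permutation part
    have hmapneg : t.map Neg.neg = Finset.univ.val.map (fun i => ((-lam i : ℝ) : ℂ)) := by
      rw [ht, Multiset.map_map]
      apply Multiset.map_congr rfl
      intro i _
      push_cast
      rfl
    have hreal : (Finset.univ.val.map lam) = Finset.univ.val.map (fun i => -lam i) := by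
      apply Multiset.map_injective Complex.ofReal_injective
      rw [Multiset.map_map, Multiset.map_map]
      rw [show ((fun r : ℝ => (r : ℂ)) ∘ lam) = (fun i => ((lam i : ℂ))) from rfl,
        show ((fun r : ℝ => (r : ℂ)) ∘ fun i => -lam i) = (fun i => ((-lam i : ℝ) : ℂ)) from rfl]
      rw [← ht, ← hmapneg]
      exact hts
    have hcount : ∀ r : ℝ,
        Fintype.card {i // lam i = r} = Fintype.card {i // -lam i = r} := by
      intro r
      have hc := congrArg (Multiset.count r) hreal
      rw [Multiset.count_map, Multiset.count_map] at hc
      rw [Fintype.card_subtype, Fintype.card_subtype, Finset.card_def, Finset.card_def,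
        Finset.filter_val, Finset.filter_val,
        Multiset.filter_congr (fun x _ => (eq_comm : lam x = r ↔ r = lam x)),
        Multiset.filter_congr (fun x _ => (eq_comm : -lam x = r ↔ r = -lam x))]
      exact hc
    exact ⟨Equiv.ofFiberEquiv (f := lam) (g := fun i => -lam i)
        (fun r => Fintype.equivOfCardEq (hcount r)),
      fun i => neg_eq_iff_eq_neg.mp
        (Equiv.ofFiberEquiv_map (f := lam) (g := fun i => -lam i)
          (fun r => Fintype.equivOfCardEq (hcount r)) i)⟩
  · intro j hj hjn
    have hcardt : Multiset.card t = Fintype.card V := by simp [ht]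
    have hk : Fintype.card V - j ≤ Multiset.card t := by omega
    have hsub : Multiset.card t - (Fintype.card V - j) = j := by omega
    have c1 := Multiset.prod_X_sub_C_coeff t hk
    rw [hsub] at c1
    have hk2 : Fintype.card V - j ≤ Multiset.card (t.map Neg.neg) := by
      rwa [Multiset.card_map]
    have c2 := Multiset.prod_X_sub_C_coeff (t.map Neg.neg) hk2
    rw [Multiset.card_map, hsub, Multiset.esymm_neg] at c2
    have hco : M.RH.charpoly.coeff (Fintype.card V - j) = (-1)^j * t.esymm j := by
      rw [h1, c1]
    have hco2 : M.RH.charpoly.coeff (Fintype.card V - j) = t.esymm j := by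
      rw [hcp, h2, c2, ← mul_assoc, ← pow_add,
        Even.neg_one_pow (by exact ⟨j, by ring⟩), one_mul]
    have heq : (-1:ℂ)^j * t.esymm j = t.esymm j := hco.symm.trans hco2
    rw [Odd.neg_one_pow hj, neg_one_mul] at heq
    have hz : t.esymm j = 0 := by linear_combination (-1/2 : ℂ) * heq
    rw [hco2, hz]
end
end
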